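/- Let b ⊂ ℂ be an open disc with β ∈ b and 0 ∉ b. Then there does not exist a holomorphic function F on b with F(z) ≠ 0 for all z ∈ b and F(z) = exp(−i·log((z − β)/z)) for all z ∈ b ∖ [0, β], where log is the principal branch. Equivalently, there is no continuous nonvanishing holomorphic extension of z ↦ exp(−i·log((z−β)/z)) across the segment [0, β] ∩ b. -/

import Mathlib

open Set Metric Complex

theorem stmt_8 (β : ℝ) (hβ : β ∈ Set.Ioo (0:ℝ) 1)
    (c : ℂ) (r : ℝ) (hr : 0 < r)
    (hβb : (β : ℂ) ∈ ball c r) (h0 : (0:ℂ) ∉ ball c r) :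
    ¬ ∃ F : ℂ → ℂ, DifferentiableOn ℂ F (ball c r) ∧
        (∀ z ∈ ball c r, F z ≠ 0) ∧
        (∀ z ∈ ball c r \ segment ℝ (0:ℂ) (β:ℂ),
          F z = Complex.exp (-Complex.I * Complex.log ((z - β) / z))) := by
  rintro ⟨F, hF, hFne, hFeq⟩
  have hβ0 : (0:ℝ) < β := hβ.1
  set S : Set ℂ := segment ℝ (0:ℂ) (β:ℂ) with hSdef
  have hzne : ∀ z ∈ ball c r, z ≠ (0:ℂ) := fun z hz h => h0 (h ▸ hz)
  -- β ∈ S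
  have hβS : (β:ℂ) ∈ S := right_mem_segment ℝ _ _
  -- S ⊆ real line
  have hSim : ∀ z ∈ S, z.im = 0 := by
    intro z hz
    rw [hSdef, segment_eq_image'] at hz
    obtain ⟨t, _, rfl⟩ := hz
    simp
  -- slit plane condition
  have hslit : ∀ z ∈ ball c r \ S, (z - β) / z ∈ Complex.slitPlane := by
    intro z ⟨hz, hzS⟩
    by_contra h
    rw [Complex.mem_slitPlane_iff] at h
    push_neg at h
    have hz0 := hzne z hz
    have hwre := h.1
    have hwim := h.2
    set t : ℝ := ((z - β) / z).re with htdef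
    have hwreal : (z - β) / z = (t : ℂ) :=
      Complex.ext_iff.2 ⟨rfl, by simpa using hwim⟩
    -- z = β / (1 - t)
    have hz_eq : z * (1 - (t:ℂ)) = (β:ℂ) := by
      have h1 : z - β = ((t:ℂ)) * z := by
        rw [← hwreal]; field_simp
      linear_combination h1
    have ht : (0:ℝ) < 1 - t := by
      have : t ≤ 0 := hwre
      linarith
    have h1t : (1:ℂ) - (t:ℂ) ≠ 0 := by
      intro h'
      have : (1:ℝ) - t = 0 := by exact_mod_cast h'
      linarith
    -- hence z ∈ S
    apply hzS
    have hmem : (1 / (1 - t)) • (β:ℂ) ∈ S := by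
      rw [hSdef, segment_eq_image']
      refine ⟨1 / (1 - t), ⟨by positivity, ?_⟩, by simp⟩
      rw [div_le_one ht]
      have : t ≤ 0 := hwre
      linarith
    have hzeq2 : z = (1 / (1 - t)) • (β:ℂ) := by
      rw [Complex.real_smul]
      push_cast
      field_simp
      linear_combination hz_eq
    rw [hzeq2]; exact hmem
  -- derivative identity off the segment
  have hderiv : ∀ z ∈ ball c r \ S, deriv F z * (z * (z - β)) + I * β * F z = 0 := by
    intro z hzm
    obtain ⟨hz, hzS⟩ := hzm
    have hz0 := hzne z hz
    have hzβ : z - (β:ℂ) ≠ 0 := by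
      intro h
      exact hzS (by rw [sub_eq_zero] at h; rw [h]; exact hβS)
    have hw : HasDerivAt (fun z : ℂ => (z - β) / z)
        ((1 * z - (z - β) * 1) / z ^ 2) z :=
      ((hasDerivAt_id z).sub_const _).div (hasDerivAt_id z) hz0
    have hlog := hw.clog (hslit z ⟨hz, hzS⟩)
    have hexp := ((hlog.const_mul (-I)).cexp)
    -- F agrees with this function on an open neighborhood
    have hScl : IsClosed S := by
      rw [hSdef, segment_eq_image']
      exact (isCompact_Icc.image (by fun_prop)).isClosed
    have hU : IsOpen (ball c r \ S) := isOpen_ball.sdiff hScl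
    have hFd : HasDerivAt F
        (Complex.exp (-I * Complex.log ((z - β) / z)) *
          (-I * ((1 * z - (z - β) * 1) / z ^ 2 / ((z - β) / z)))) z := by
      apply hexp.congr_of_eventuallyEq
      filter_upwards [hU.mem_nhds ⟨hz, hzS⟩] with x hx
      exact hFeq x hx
    rw [hFd.deriv, hFeq z ⟨hz, hzS⟩]
    field_simp
    ring
  -- extend the identity to the whole ball by continuity
  have hAn := hF.analyticOnNhd isOpen_ball
  have hd' : DifferentiableOn ℂ (deriv F) (ball c r) := hAn.deriv.differentiableOn
  set G : ℂ → ℂ := fun z => deriv F z * (z * (z - β)) + I * β * F z with hGdef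
  have hGc : ContinuousOn G (ball c r) := by
    apply ContinuousOn.add
    · exact hd'.continuousOn.mul (by fun_prop)
    · exact (continuousOn_const).mul hF.continuousOn
  have hdense : Dense Sᶜ := by
    have h1 : Dense {z : ℂ | z.im ≠ 0} := by
      intro z
      by_cases h : z.im = 0
      · apply mem_closure_iff_seq_limit.2
        refine ⟨fun n => z + I * (1 / (n + 1) : ℝ), fun n => ?_, ?_⟩
        · have hpos : (0:ℝ) < 1 / (n + 1) := by positivity
          simp only [Set.mem_setOf_eq, Complex.add_im, Complex.mul_im, Complex.I_re,
            Complex.I_im, Complex.ofReal_re, Complex.ofReal_im, h]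
          intro hcon
          nlinarith
        · have : Filter.Tendsto (fun n : ℕ => (1 / (n + 1) : ℝ)) Filter.atTop (nhds 0) :=
            tendsto_one_div_add_atTop_nhds_zero_nat
          have := ((Complex.continuous_ofReal.tendsto 0).comp this).const_mul I |>.const_add z
          simpa using this
      · exact subset_closure h
    refine h1.mono ?_
    intro z hz hzS
    exact hz (hSim z hzS)
  have hG0 : ∀ z ∈ ball c r, G z = 0 := by
    intro z hz
    have hcl : z ∈ closure (ball c r ∩ Sᶜ) :=
      hdense.open_subset_closure_inter isOpen_ball hz
    have hne : (nhdsWithin z (ball c r ∩ Sᶜ)).NeBot :=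
      mem_closure_iff_nhdsWithin_neBot.1 hcl
    have ht1 : Filter.Tendsto G (nhdsWithin z (ball c r ∩ Sᶜ)) (nhds (G z)) :=
      ((hGc.continuousAt (isOpen_ball.mem_nhds hz)).continuousWithinAt).tendsto
    have ht2 : Filter.Tendsto G (nhdsWithin z (ball c r ∩ Sᶜ)) (nhds 0) := by
      apply Filter.Tendsto.congr' _ tendsto_const_nhds
      filter_upwards [self_mem_nhdsWithin] with x hx
      exact (hderiv x ⟨hx.1, hx.2⟩).symm
    exact tendsto_nhds_unique ht1 ht2
  -- choose a small circle around β
  set d := dist (β:ℂ) c with hd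
  have hdr : d < r := mem_ball.1 hβb
  set ε := (r - d) / 2 with hε
  have hε0 : 0 < ε := by simp [hε]; linarith
  have hsub : closedBall (β:ℂ) ε ⊆ ball c r := by
    intro x hx
    have : dist x c ≤ dist x (β:ℂ) + d := dist_triangle _ _ _
    have hx' : dist x (β:ℂ) ≤ ε := mem_closedBall.1 hx
    rw [mem_ball]
    calc dist x c ≤ dist x (β:ℂ) + d := this
      _ ≤ ε + d := by linarith
      _ < r := by rw [hε]; linarith
  have hballsub : ball (β:ℂ) ε ⊆ ball c r := (ball_subset_closedBall).trans hsub
  -- the integral of deriv F over the circle is zero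
  have hI1 : (∮ z in C((β:ℂ), ε), deriv F z) = 0 := by
    apply circleIntegral_eq_zero_of_differentiable_on_off_countable hε0.le
      Set.countable_empty ((hd'.continuousOn).mono hsub)
    intro z hz
    exact (hd'.differentiableAt (isOpen_ball.mem_nhds
      (hballsub hz.1)))
  -- the Cauchy integral formula on g
  set g : ℂ → ℂ := fun z => -I * β * F z / z with hgdef
  have hgd : DifferentiableOn ℂ g (ball c r) := by
    apply DifferentiableOn.div
    · exact (differentiableOn_const _).mul hF
    · exact differentiableOn_id
    · exact hzne
  have hgDC : DiffContOnCl ℂ g (ball (β:ℂ) ε) := by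
    constructor
    · exact hgd.mono hballsub
    · exact (hgd.continuousOn).mono (by rw [closure_ball _ hε0.ne']; exact hsub)
  have hI2 : (∮ z in C((β:ℂ), ε), (z - (β:ℂ))⁻¹ • g z) = (2 * Real.pi * I : ℂ) • g β :=
    hgDC.circleIntegral_sub_inv_smul (mem_ball_self hε0)
  -- the integrands agree on the circle
  have hcong : (∮ z in C((β:ℂ), ε), deriv F z)
      = ∮ z in C((β:ℂ), ε), (z - (β:ℂ))⁻¹ • g z := by
    apply circleIntegral.integral_congr hε0.le
    intro z hz
    have hzb : z ∈ ball c r := hsub (sphere_subset_closedBall hz)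
    have hzβ : z - (β:ℂ) ≠ 0 := by
      intro h
      rw [sub_eq_zero] at h
      have : dist z (β:ℂ) = ε := mem_sphere.1 hz
      rw [h] at this
      simp at this
      exact hε0.ne this
    have hz0 := hzne z hzb
    have hGz := hG0 z hzb
    rw [hGdef] at hGz
    simp only [smul_eq_mul, hgdef]
    field_simp
    field_simp at hGz
    linear_combination hGz
  -- put it together
  have hFβ := hFne (β:ℂ) hβb
  have hβc0 : (β:ℂ) ≠ 0 := by exact_mod_cast hβ0.ne'
  have : (0:ℂ) = (2 * Real.pi * I : ℂ) • g β := by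
    rw [← hI2, ← hcong, hI1]
  rw [hgdef] at this
  simp only [smul_eq_mul] at this
  have hπ : (Real.pi : ℂ) ≠ 0 := by exact_mod_cast Real.pi_ne_zero
  apply hFβ
  have h2 : (2 * Real.pi * I : ℂ) * (-I * β * F β / β) = 2 * Real.pi * F β := by
    have hI2 : (I:ℂ)*I = -1 := Complex.I_mul_I
    field_simp
    linear_combination (-1 : ℂ) * hI2
  rw [h2] at this
  have h3 := this.symm
  have h2π : (2 * Real.pi : ℂ) ≠ 0 := by
    simp [Real.pi_ne_zero]
  have : (2 * Real.pi : ℂ) * F β = 0 := by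
    push_cast at h3 ⊢
    linear_combination h3
  rcases mul_eq_zero.1 this with h | h
  · exact absurd h (by push_cast at h2π ⊢; exact h2π)
  · exact h
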